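/- Let d ≥ 1, t₀ ≤ T, p ≥ 2 and C₃ > 0. Suppose μ, σ : [t₀,T] × ℝ^d → ℝ^d satisfy the Khasminskii-type condition ⟨y, μ(t,y)⟩ + (p−1)|σ(t,y)|² ≤ C₃(1 + |y|²) for all t ∈ [t₀,T] and y ∈ ℝ^d. Fix R₀ > 0. Then there exists a constant C₅ > 0 (one may take C₅ = 2C₃·max(1, 1/R₀²)), depending only on C₃ and R₀, such that for every R ≥ R₀, every t ∈ [t₀,T] and every y ∈ ℝ^d, ⟨y, μ(t, π_R(y))⟩ + (p−1)|σ(t, π_R(y))|² ≤ C₅(1 + |y|²). -/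

import Mathlib

set_option maxHeartbeats 1000000


open Classical

/-- The truncation map `π_R : ℝ^d → ℝ^d`, `π_R(y) = (min(|y|,R)/|y|)·y` for `y ≠ 0`,
`π_R(0) = 0`. -/
noncomputable def truncMap {d : ℕ} (R : ℝ) (y : EuclideanSpace ℝ (Fin d)) :
    EuclideanSpace ℝ (Fin d) :=
  if y = 0 then 0 else (min ‖y‖ R / ‖y‖) • y

/-- The truncated coefficients inherit the Khasminskii-type condition with a constant
independent of the truncation level `R ≥ R₀`. -/
theorem truncated_khasminskii
    (d : ℕ) (hd : 1 ≤ d) (t₀ T : ℝ) (ht : t₀ ≤ T)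
    (p C₃ : ℝ) (hp : 2 ≤ p) (hC₃ : 0 < C₃)
    (μ σ : ℝ → EuclideanSpace ℝ (Fin d) → EuclideanSpace ℝ (Fin d))
    (hcond : ∀ t ∈ Set.Icc t₀ T, ∀ y : EuclideanSpace ℝ (Fin d),
      (inner ℝ y (μ t y) : ℝ) + (p - 1) * ‖σ t y‖ ^ 2 ≤ C₃ * (1 + ‖y‖ ^ 2))
    (R₀ : ℝ) (hR₀ : 0 < R₀) :
    ∃ C₅ : ℝ, 0 < C₅ ∧
      ∀ R : ℝ, R₀ ≤ R → ∀ t ∈ Set.Icc t₀ T, ∀ y : EuclideanSpace ℝ (Fin d),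
        (inner ℝ y (μ t (truncMap R y)) : ℝ) + (p - 1) * ‖σ t (truncMap R y)‖ ^ 2
          ≤ C₅ * (1 + ‖y‖ ^ 2) := by
  set K : ℝ := max 1 (1 / R₀ ^ 2) with hK
  have hK1 : (1:ℝ) ≤ K := le_max_left _ _
  have hK2 : (1:ℝ) ≤ K * R₀ ^ 2 := by
    have : 1 / R₀ ^ 2 ≤ K := le_max_right _ _
    have hR2 : (0:ℝ) < R₀ ^ 2 := by positivity
    calc (1:ℝ) = (1 / R₀ ^ 2) * R₀ ^ 2 := by field_simp
    _ ≤ K * R₀ ^ 2 := by nlinarith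
  refine ⟨2 * C₃ * K, by positivity, ?_⟩
  intro R hR t htI y
  have hpm : (0:ℝ) ≤ p - 1 := by linarith
  have hKpos : (0:ℝ) < K := lt_of_lt_of_le one_pos hK1
  by_cases hy : y = 0
  · subst hy
    have htr : truncMap R (0 : EuclideanSpace ℝ (Fin d)) = 0 := if_pos rfl
    rw [htr]
    have h0 := hcond t htI 0
    have hi : (inner ℝ (0 : EuclideanSpace ℝ (Fin d)) (μ t 0) : ℝ) = 0 := inner_zero_left _
    rw [hi] at h0 ⊢
    simp only [norm_zero] at h0 ⊢
    nlinarith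
  · have hyn : (0:ℝ) < ‖y‖ := norm_pos_iff.mpr hy
    have hRpos : (0:ℝ) < R := lt_of_lt_of_le hR₀ hR
    set m : ℝ := min ‖y‖ R with hm
    have hmpos : (0:ℝ) < m := lt_min hyn hRpos
    have hmy : m ≤ ‖y‖ := min_le_left _ _
    have hz : truncMap R y = (m / ‖y‖) • y := by simp [truncMap, hy, hm]
    set z : EuclideanSpace ℝ (Fin d) := truncMap R y with hzdef
    have hznorm : ‖z‖ = m := by
      rw [hz, norm_smul, Real.norm_eq_abs, abs_of_pos (by positivity)]
      field_simp
    have hinner : (inner ℝ y (μ t z) : ℝ) = (‖y‖ / m) * (inner ℝ z (μ t z) : ℝ) := by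
      rw [hz, real_inner_smul_left]
      ring_nf
      field_simp
    have hcz := hcond t htI z
    rw [hznorm] at hcz
    set A : ℝ := (inner ℝ z (μ t z) : ℝ) with hA
    set B : ℝ := ‖σ t z‖ ^ 2 with hB
    have hBpos : (0:ℝ) ≤ B := by positivity
    have hlam : (1:ℝ) ≤ ‖y‖ / m := (one_le_div hmpos).mpr hmy
    rw [hinner]
    have step1 : (‖y‖ / m) * A + (p - 1) * B ≤ (‖y‖ / m) * (C₃ * (1 + m ^ 2)) := by
      have h1 : (p - 1) * B ≤ (‖y‖ / m) * ((p - 1) * B) :=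
        le_mul_of_one_le_left (by positivity) hlam
      have h2 : (‖y‖ / m) * (A + (p - 1) * B) ≤ (‖y‖ / m) * (C₃ * (1 + m ^ 2)) := by
        apply mul_le_mul_of_nonneg_left hcz (by positivity)
      nlinarith
    refine step1.trans ?_
    rw [div_mul_eq_mul_div, div_le_iff₀ hmpos]
    clear_value z A B
    clear hinner step1 hcz hz hzdef hznorm hA hB hBpos hlam hcond
    -- goal: ‖y‖ * (C₃ * (1 + m^2)) ≤ 2*C₃*K*(1+‖y‖^2) * m
    rcases min_cases ‖y‖ R with ⟨he, hle⟩ | ⟨he, hlt⟩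
    · -- m = ‖y‖
      rw [hm, he]
      have hX : (0:ℝ) ≤ ‖y‖ * (1 + ‖y‖ ^ 2) := by positivity
      nlinarith [mul_nonneg (mul_nonneg hC₃.le hX) (by linarith : (0:ℝ) ≤ 2 * K - 1)]
    · -- m = R, R < ‖y‖
      rw [hm, he]
      have hRy : R ≤ ‖y‖ := le_of_lt hlt
      have hKR : (1:ℝ) ≤ K * R ^ 2 := by
        nlinarith [mul_nonneg hKpos.le (mul_nonneg (by linarith : (0:ℝ) ≤ R - R₀)
          (by linarith : (0:ℝ) ≤ R + R₀))]
      have h1 : (1:ℝ) ≤ K * R * ‖y‖ := by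
        nlinarith [mul_nonneg (mul_nonneg hKpos.le hRpos.le) (by linarith : (0:ℝ) ≤ ‖y‖ - R)]
      have e1 : ‖y‖ ≤ K * ‖y‖ ^ 2 * R := by
        nlinarith [mul_nonneg hyn.le (by linarith : (0:ℝ) ≤ K * R * ‖y‖ - 1)]
      have e2 : ‖y‖ * R ^ 2 ≤ K * ‖y‖ ^ 2 * R := by
        nlinarith [mul_nonneg (mul_nonneg hyn.le hRpos.le)
          (by nlinarith [mul_nonneg (by linarith : (0:ℝ) ≤ K - 1) hyn.le] :
            (0:ℝ) ≤ K * ‖y‖ - R)]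
      have e3 : ‖y‖ * (1 + R ^ 2) ≤ 2 * K * (1 + ‖y‖ ^ 2) * R := by
        nlinarith [mul_nonneg hKpos.le hRpos.le]
      nlinarith [mul_le_mul_of_nonneg_left e3 hC₃.le]
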